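/- Let L ≥ 3 be odd and let A = {1, L, L+1}. Then for every n ∈ ℕ, W_A(n) = II if and only if n mod (2L+1) ∈ {0, 2, 4, …, L−1}. -/

import Mathlib

/-- Standard NIM winner for the one-pile subtraction game with move set `A`:
`nimW A n = true` means Player I (the player to move) wins with `n` stones;
`nimW A n = false` means Player II wins.  (For `A` consisting of positive
integers this is exactly: Player I wins iff some `a ∈ A` with `a ≤ n` moves to
a Player-II-win position `n - a`.) -/
def nimW (A : Finset ℕ) : ℕ → Bool
  | n =>
    decide (((A.filter fun a => 0 < a ∧ a ≤ n).attach.filter (fun a =>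
      nimW A (n - a.1) = false)).Nonempty)
decreasing_by
  all_goals
    have h := a.2
    simp only [Finset.mem_filter] at h
    omega

lemma nimW_true_iff (A : Finset ℕ) (n : ℕ) :
    nimW A n = true ↔ ∃ a ∈ A, 0 < a ∧ a ≤ n ∧ nimW A (n - a) = false := by
  rw [nimW]
  rw [decide_eq_true_iff]
  simp [Finset.Nonempty, Finset.mem_filter]
  tauto

lemma mod_sub_le (m a r k : ℕ) (ha : a ≤ r) (hr : r < m) :
    (m * k + r - a) % m = r - a := by
  have h : m * k + r - a = m * k + (r - a) := by omega
  rw [h, Nat.mul_add_mod, Nat.mod_eq_of_lt (by omega)]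

lemma mod_sub_gt (m a r k : ℕ) (ha : r < a) (haa : a ≤ m) (hk : 1 ≤ k) :
    (m * k + r - a) % m = m + r - a := by
  obtain ⟨k', rfl⟩ : ∃ k', k = k' + 1 := ⟨k - 1, by omega⟩
  have h : m * (k' + 1) + r - a = m * k' + (m + r - a) := by
    rw [Nat.mul_succ]; omega
  rw [h, Nat.mul_add_mod, Nat.mod_eq_of_lt (by omega)]


/-- For odd `L ≥ 3` and `A = {1, L, L+1}`,
Player II wins standard NIM with `n` stones iff
`n mod (2L+1) ∈ {0, 2, 4, …, L-1}`. -/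
theorem nim_one_L_Lsucc_odd_winCondition (L : ℕ) (hL : 3 ≤ L) (hLodd : Odd L)
    (n : ℕ) :
    nimW ({1, L, L + 1} : Finset ℕ) n = false ↔
      Even (n % (2 * L + 1)) ∧ n % (2 * L + 1) ≤ L - 1 := by
  have hL2 : L % 2 = 1 := Nat.odd_iff.mp hLodd
  set m := 2 * L + 1 with hm
  set A : Finset ℕ := {1, L, L + 1} with hA
  induction n using Nat.strong_induction_on with
  | _ n ih =>
    have key : ∀ j < n, nimW A j = false ↔ (j % m) % 2 = 0 ∧ j % m ≤ L - 1 := by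
      intro j hj
      exact (ih j hj).trans (by rw [Nat.even_iff])
    have hmem : ∀ a : ℕ, a ∈ A ↔ a = 1 ∨ a = L ∨ a = L + 1 := by
      intro a; simp [hA]
    have hunf : nimW A n = true ↔
        ∃ a, (a = 1 ∨ a = L ∨ a = L + 1) ∧ 0 < a ∧ a ≤ n ∧ nimW A (n - a) = false := by
      rw [nimW_true_iff]
      constructor
      · rintro ⟨a, h1, h2⟩; exact ⟨a, (hmem a).mp h1, h2⟩
      · rintro ⟨a, h1, h2⟩; exact ⟨a, (hmem a).mpr h1, h2⟩
    set r := n % m with hr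
    have hrm : r < m := Nat.mod_lt _ (by omega)
    have hrn : r ≤ n := Nat.mod_le _ _
    obtain ⟨k, hk⟩ : ∃ k, n = m * k + r := ⟨n / m, by rw [hr]; exact (Nat.div_add_mod n m).symm⟩
    rw [Nat.even_iff]
    constructor
    · -- nimW n = false → P r; contrapositive
      intro hfalse
      by_contra hP
      -- find a winning move, contradiction with hfalse
      have hktrue : nimW A n = true := by
        rw [hunf]
        by_cases hcase : r % 2 = 1 ∧ r ≤ L
        · -- move 1
          refine ⟨1, Or.inl rfl, by omega, by omega, ?_⟩
          rw [key (n - 1) (by omega)]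
          have : (n - 1) % m = r - 1 := by
            rw [hk]; exact mod_sub_le m 1 r k (by omega) hrm
          rw [this]; omega
        · by_cases hcase2 : r % 2 = 1
          · -- r odd, r > L : move L
            refine ⟨L, Or.inr (Or.inl rfl), by omega, by omega, ?_⟩
            rw [key (n - L) (by omega)]
            have : (n - L) % m = r - L := by
              rw [hk]; exact mod_sub_le m L r k (by omega) hrm
            rw [this]; omega
          · -- r even, r ≥ L+1 : move L+1
            refine ⟨L + 1, Or.inr (Or.inr rfl), by omega, by omega, ?_⟩
            rw [key (n - (L + 1)) (by omega)]
            have : (n - (L + 1)) % m = r - (L + 1) := by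
              rw [hk]; exact mod_sub_le m (L + 1) r k (by omega) hrm
            rw [this]; omega
      rw [hktrue] at hfalse; simp at hfalse
    · -- P r → nimW n = false
      rintro ⟨hre, hrle⟩
      by_contra htrue
      have htrue' : nimW A n = true := by
        cases h : nimW A n
        · exact absurd h htrue
        · rfl
      rw [hunf] at htrue'
      obtain ⟨a, ha, hapos, han, hmove⟩ := htrue'
      have hk1 : r < n → 1 ≤ k := by
        intro h
        rcases Nat.eq_zero_or_pos k with h0 | h1
        · subst h0; omega
        · exact h1
      rcases ha with rfl | h2 | h2
      · -- a = 1
        rw [key (n - 1) (by omega)] at hmove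
        rcases Nat.lt_or_ge r 1 with hlt | hge
        · have : (n - 1) % m = m + r - 1 := by
            rw [hk]; exact mod_sub_gt m 1 r k hlt (by omega) (hk1 (by omega))
          rw [this] at hmove; omega
        · have : (n - 1) % m = r - 1 := by
            rw [hk]; exact mod_sub_le m 1 r k hge hrm
          rw [this] at hmove; omega
      · -- a = L
        rw [h2] at han hmove
        rw [key (n - L) (by omega)] at hmove
        rcases Nat.lt_or_ge r L with hlt | hge
        · have : (n - L) % m = m + r - L := by
            rw [hk]; exact mod_sub_gt m L r k hlt (by omega) (hk1 (by omega))
          rw [this] at hmove; omega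
        · have : (n - L) % m = r - L := by
            rw [hk]; exact mod_sub_le m L r k hge hrm
          rw [this] at hmove; omega
      · -- a = L + 1
        rw [h2] at han hmove
        rw [key (n - (L + 1)) (by omega)] at hmove
        rcases Nat.lt_or_ge r (L + 1) with hlt | hge
        · have : (n - (L + 1)) % m = m + r - (L + 1) := by
            rw [hk]; exact mod_sub_gt m (L + 1) r k hlt (by omega) (hk1 (by omega))
          rw [this] at hmove; omega
        · have : (n - (L + 1)) % m = r - (L + 1) := by
            rw [hk]; exact mod_sub_le m (L + 1) r k hge hrm
          rw [this] at hmove; omega
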